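/- Let M(X) be an n×n matrix with entries in K[X], K a field, and let x₀ ∈ K. If the rank of M(x₀) equals n − k, then x₀ is a root of det(M(X)) of multiplicity at least k. -/

import Mathlib

open Polynomial Module Matrix

/-- If M(X) is an n×n matrix over K[X] and the rank of M(x₀) is n − k, then x₀
is a root of det M(X) of multiplicity at least k, i.e. (X − x₀)^k ∣ det M(X). -/
theorem det_root_multiplicity_of_rank (K : Type*) [Field K]
    (n k : ℕ) (hk : k ≤ n) (M : Matrix (Fin n) (Fin n) (Polynomial K)) (x₀ : K)
    (hrank : (M.map (Polynomial.eval x₀)).rank = n - k) :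
    (X - C x₀) ^ k ∣ M.det := by
  classical
  set A := M.map (Polynomial.eval x₀) with hA
  set κ := LinearMap.ker A.mulVecLin with hκ
  have hrn : finrank K (LinearMap.range A.mulVecLin) + finrank K κ = n := by
    rw [hκ, LinearMap.finrank_range_add_finrank_ker]; simp
  have hκk : finrank K κ = k := by
    have h1 : A.rank = finrank K (LinearMap.range A.mulVecLin) := rfl
    omega
  obtain ⟨p, hc⟩ := Submodule.exists_isCompl κ
  have hpk : finrank K p = n - k := by
    have := Submodule.finrank_add_eq_of_isCompl hc.symm
    simp at this; omega
  set m := n - k with hm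
  have hmk : m + k = n := Nat.sub_add_cancel hk
  let pb : Basis (Fin m) K p := finBasisOfFinrankEq K p hpk
  let κb : Basis (Fin k) K κ := finBasisOfFinrankEq K κ hκk
  let e : Fin m ⊕ Fin k ≃ Fin n := finSumFinEquiv.trans (finCongr hmk)
  let b' : Basis (Fin m ⊕ Fin k) K (Fin n → K) :=
    (pb.prod κb).map (Submodule.prodEquivOfIsCompl p κ hc.symm)
  let b : Basis (Fin n) K (Fin n → K) := b'.reindex e
  have hbκ : ∀ j : Fin k, b (e (Sum.inr j)) ∈ κ := by
    intro j
    have : b (e (Sum.inr j)) = b' (Sum.inr j) := by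
      simp [b, Basis.reindex_apply]
    rw [this]
    simp [b', Basis.prod_apply, Submodule.prodEquivOfIsCompl]
    show (0 : Fin n → K) + ((κb j : κ) : Fin n → K) ∈ κ
    exact κ.add_mem κ.zero_mem (κb j).2
  -- the change-of-basis matrix
  let Q : Matrix (Fin n) (Fin n) K := (Pi.basisFun K (Fin n)).toMatrix b
  have hQ : ∀ i j, Q i j = b j i := by
    intro i j; simp [Q, Basis.toMatrix_apply]
  have hQunit : IsUnit Q.det :=
    letI := (Pi.basisFun K (Fin n)).invertibleToMatrix b
    Matrix.isUnit_det_of_invertible Q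
  -- the product matrix
  set N := M * Q.map C with hN
  have hevalN : N.map (Polynomial.eval x₀) = A * Q := by
    rw [hN]
    have : (M * Q.map C).map (Polynomial.eval x₀)
        = M.map (Polynomial.eval x₀) * (Q.map C).map (Polynomial.eval x₀) :=
      Matrix.map_mul (f := evalRingHom x₀)
    rw [this, ← hA]
    congr 1
    ext i j; simp
  have hdvdcol : ∀ (i : Fin n) (j : Fin k), (X - C x₀) ∣ N i (e (Sum.inr j)) := by
    intro i j
    rw [dvd_iff_isRoot, IsRoot]
    have h1 : Polynomial.eval x₀ (N i (e (Sum.inr j))) = (A * Q) i (e (Sum.inr j)) := by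
      rw [← hevalN]; simp
    rw [h1, Matrix.mul_apply]
    have h2 : A.mulVec (b (e (Sum.inr j))) = 0 := hbκ j
    calc ∑ l, A i l * Q l (e (Sum.inr j)) = A.mulVec (b (e (Sum.inr j))) i := by
          simp [Matrix.mulVec, dotProduct, hQ]
      _ = 0 := by rw [h2]; rfl
  -- factor out from the k columns
  set N₂ := N.submatrix e e with hN₂
  have hdetN₂ : N₂.det = N.det := Matrix.det_submatrix_equiv_self e N
  let v : Fin m ⊕ Fin k → Polynomial K := Sum.elim (fun _ => 1) (fun _ => X - C x₀)
  let N' : Matrix (Fin m ⊕ Fin k) (Fin m ⊕ Fin k) (Polynomial K) := fun i j =>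
    Sum.elim (fun j' => N₂ i (Sum.inl j')) (fun j' => N₂ i (Sum.inr j') / (X - C x₀)) j
  have hXne : (X - C x₀ : Polynomial K) ≠ 0 := X_sub_C_ne_zero x₀
  have hfac : ∀ i j, N₂ i j = v j * N' i j := by
    intro i j
    cases j with
    | inl j' => simp [v, N']
    | inr j' =>
      have hd : (X - C x₀) ∣ N₂ i (Sum.inr j') := hdvdcol (e i) j'
      simp only [v, N', Sum.elim_inr]
      exact (EuclideanDomain.mul_div_cancel' hXne hd).symm
  have hdet : N₂.det = (X - C x₀) ^ k * N'.det := by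
    have : N₂ = Matrix.of (fun i j => v j * N' i j) := by
      exact Matrix.ext hfac
    rw [this, Matrix.det_mul_row]
    congr 1
    rw [Fintype.prod_sum_type]
    simp [v]
  have hdvd : (X - C x₀) ^ k ∣ N.det := by
    rw [← hdetN₂, hdet]; exact Dvd.intro _ rfl
  rw [hN, Matrix.det_mul] at hdvd
  have hCunit : IsUnit ((Q.map C).det) := by
    have h := RingHom.map_det (C : K →+* Polynomial K) Q
    rw [RingHom.mapMatrix_apply] at h
    rw [← h]
    exact hQunit.map C
  exact (hCunit.dvd_mul_right).mp hdvd
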